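/- Let ν > 1, a₀ > 0, and 2 ≤ n ≤ m. With w(0) = a₀, w(k) = k^{−ν} for k ≥ 1, and S_m(n) = Σ_{k₁+⋯+k_m = n} w(k₁)⋯w(k_m), one has the lower bound S_m(n) ≥ a₀^{m−n}·(a₀+1)^{n−1}·n^{−ν}. -/

import Mathlib

/-- Weighted power-law sequence: `w 0 = a₀`, `w k = k^(-ν)` for `k ≥ 1`. -/
noncomputable def plw (a₀ ν : ℝ) (k : ℕ) : ℝ :=
  if k = 0 then a₀ else (k : ℝ) ^ (-ν)

/-- `Sm m n`: the `m`-fold convolution of `plw a₀ ν`. -/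
noncomputable def Sm (a₀ ν : ℝ) (m n : ℕ) : ℝ :=
  ∑ k ∈ Finset.Nat.antidiagonalTuple m n, ∏ i : Fin m, plw a₀ ν (k i)

lemma plw_nonneg (ν : ℝ) {a₀ : ℝ} (ha : 0 ≤ a₀) (k : ℕ) : 0 ≤ plw a₀ ν k := by
  unfold plw
  split
  · exact ha
  · positivity

lemma Sm_nonneg {a₀ ν : ℝ} (ha : 0 ≤ a₀) (m n : ℕ) : 0 ≤ Sm a₀ ν m n := by
  apply Finset.sum_nonneg
  intro k _
  exact Finset.prod_nonneg fun i _ => plw_nonneg ν ha _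

/-- The image of `antidiagonalTuple m (N - j)` under `Fin.cons j`, for `j ≤ N`. -/
noncomputable def Tset (m N j : ℕ) : Finset (Fin (m + 1) → ℕ) :=
  (Finset.Nat.antidiagonalTuple m (N - j)).image (Fin.cons j)

lemma Tset_subset {m N j : ℕ} (hj : j ≤ N) :
    Tset m N j ⊆ Finset.Nat.antidiagonalTuple (m + 1) N := by
  intro x hx
  simp only [Tset, Finset.mem_image] at hx
  obtain ⟨k, hk, rfl⟩ := hx
  rw [Finset.Nat.mem_antidiagonalTuple] at hk ⊢
  rw [Fin.sum_cons, hk]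
  omega

lemma Tset_sum (a₀ ν : ℝ) (m N j : ℕ) :
    ∑ k ∈ Tset m N j, ∏ i : Fin (m + 1), plw a₀ ν (k i)
      = plw a₀ ν j * Sm a₀ ν m (N - j) := by
  rw [Tset, Sm, Finset.mul_sum]
  rw [Finset.sum_image (g := Fin.cons j)
    (f := fun k => ∏ i : Fin (m + 1), plw a₀ ν (k i))
    (fun a _ b _ h => Fin.cons_right_injective j h)]
  refine Finset.sum_congr rfl fun k _ => ?_
  rw [Fin.prod_univ_succ]
  simp only [Fin.cons_zero, Fin.cons_succ]

lemma Sm_step {a₀ ν : ℝ} (ha : 0 ≤ a₀) (m N : ℕ) :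
    a₀ * Sm a₀ ν m N ≤ Sm a₀ ν (m + 1) N := by
  have h := Tset_sum a₀ ν m N 0
  rw [(by simp [plw] : plw a₀ ν 0 = a₀), Nat.sub_zero] at h
  rw [Sm, ← Sm, ← h]
  exact Finset.sum_le_sum_of_subset_of_nonneg (Tset_subset (Nat.zero_le N))
    (fun k _ _ => Finset.prod_nonneg fun i _ => plw_nonneg ν ha _)

lemma Sm_step2 {a₀ ν : ℝ} (ha : 0 ≤ a₀) (m N : ℕ) (hN : 1 ≤ N) :
    a₀ * Sm a₀ ν m N + Sm a₀ ν m (N - 1) ≤ Sm a₀ ν (m + 1) N := by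
  have hdisj : Disjoint (Tset m N 0) (Tset m N 1) := by
    rw [Finset.disjoint_left]
    intro x hx0 hx1
    simp only [Tset, Finset.mem_image] at hx0 hx1
    obtain ⟨k0, _, rfl⟩ := hx0
    obtain ⟨k1, _, h⟩ := hx1
    have := congrFun h 0
    simp [Fin.cons_zero] at this
  have hsub : Tset m N 0 ∪ Tset m N 1 ⊆ Finset.Nat.antidiagonalTuple (m + 1) N :=
    Finset.union_subset (Tset_subset (Nat.zero_le N)) (Tset_subset hN)
  have h0 := Tset_sum a₀ ν m N 0
  have h1 := Tset_sum a₀ ν m N 1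
  rw [(by simp [plw] : plw a₀ ν 0 = a₀), Nat.sub_zero] at h0
  have hplw1 : plw a₀ ν 1 = 1 := by
    simp [plw, Real.one_rpow]
  rw [hplw1, one_mul] at h1
  calc a₀ * Sm a₀ ν m N + Sm a₀ ν m (N - 1)
      = ∑ k ∈ Tset m N 0 ∪ Tset m N 1, ∏ i : Fin (m + 1), plw a₀ ν (k i) := by
        rw [Finset.sum_union hdisj, h0, h1]
    _ ≤ Sm a₀ ν (m + 1) N := by
        rw [Sm]
        exact Finset.sum_le_sum_of_subset_of_nonneg hsub
          (fun k _ _ => Finset.prod_nonneg fun i _ => plw_nonneg ν ha _)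

lemma Sm_one (a₀ ν : ℝ) (N : ℕ) (hN : 1 ≤ N) : Sm a₀ ν 1 N = (N : ℝ) ^ (-ν) := by
  rw [Sm, Finset.Nat.antidiagonalTuple_one, Finset.sum_singleton]
  rw [Fin.prod_univ_one]
  have : N ≠ 0 := by omega
  simp [plw, this]

/-- n-variable lower bound: `Sm (k+1) N ≥ (a₀+1)^k * N^(-ν)` for `N ≥ k+1`. -/
lemma Sm_diag {a₀ ν : ℝ} (ha : 0 ≤ a₀) (hν : 0 < ν) :
    ∀ k N : ℕ, k + 1 ≤ N → (a₀ + 1) ^ k * (N : ℝ) ^ (-ν) ≤ Sm a₀ ν (k + 1) N := by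
  intro k
  induction k with
  | zero => intro N hN; rw [Sm_one a₀ ν N hN]; simp
  | succ k ih =>
    intro N hN
    have hN1 : k + 1 ≤ N - 1 := by omega
    have h1 := ih N (by omega)
    have h2 := ih (N - 1) hN1
    have hmono : (N : ℝ) ^ (-ν) ≤ ((N - 1 : ℕ) : ℝ) ^ (-ν) := by
      apply Real.rpow_le_rpow_of_nonpos
      · exact_mod_cast (by omega : 0 < N - 1)
      · exact_mod_cast Nat.sub_le N 1
      · linarith
    have hstep := Sm_step2 (ν := ν) ha (k + 1) N (by omega)
    have hnn : 0 ≤ (a₀ + 1) ^ k := by positivity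
    calc (a₀ + 1) ^ (k + 1) * (N : ℝ) ^ (-ν)
        = a₀ * ((a₀ + 1) ^ k * (N : ℝ) ^ (-ν)) + (a₀ + 1) ^ k * (N : ℝ) ^ (-ν) := by ring
      _ ≤ a₀ * Sm a₀ ν (k + 1) N + (a₀ + 1) ^ k * ((N - 1 : ℕ) : ℝ) ^ (-ν) := by
          gcongr
      _ ≤ a₀ * Sm a₀ ν (k + 1) N + Sm a₀ ν (k + 1) (N - 1) := by gcongr
      _ ≤ Sm a₀ ν (k + 2) N := hstep

lemma Sm_pad (ν : ℝ) {a₀ : ℝ} (ha : 0 ≤ a₀) (n N : ℕ) :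
    ∀ d : ℕ, a₀ ^ d * Sm a₀ ν n N ≤ Sm a₀ ν (n + d) N := by
  intro d
  induction d with
  | zero => simp
  | succ d ih =>
    calc a₀ ^ (d + 1) * Sm a₀ ν n N = a₀ * (a₀ ^ d * Sm a₀ ν n N) := by ring
      _ ≤ a₀ * Sm a₀ ν (n + d) N := by
          have h1 := Sm_nonneg (ν := ν) ha n N
          have h2 : 0 ≤ a₀ ^ d := by positivity
          gcongr
      _ ≤ Sm a₀ ν (n + d + 1) N := Sm_step ha (n + d) N

theorem Sm_lower_bound_few_vars (ν a₀ : ℝ) (hν : 1 < ν) (ha : 0 < a₀)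
    (m n : ℕ) (hn : 2 ≤ n) (hnm : n ≤ m) :
    a₀ ^ (m - n) * (a₀ + 1) ^ (n - 1) * (n : ℝ) ^ (-ν) ≤ Sm a₀ ν m n := by
  have ha' : 0 ≤ a₀ := ha.le
  have hdiag := Sm_diag ha' (by linarith : (0:ℝ) < ν) (n - 1) n (by omega)
  rw [(by omega : n - 1 + 1 = n)] at hdiag
  have hpad := Sm_pad ν ha' n n (m - n)
  rw [(by omega : n + (m - n) = m)] at hpad
  calc a₀ ^ (m - n) * (a₀ + 1) ^ (n - 1) * (n : ℝ) ^ (-ν)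
      = a₀ ^ (m - n) * ((a₀ + 1) ^ (n - 1) * (n : ℝ) ^ (-ν)) := by ring
    _ ≤ a₀ ^ (m - n) * Sm a₀ ν n n := by gcongr
    _ ≤ Sm a₀ ν m n := hpad
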